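/- Let n ≥ 4 and let a and b be the transformations of Q_n = {0,…,n-1} given by qa = q+1 for 0 ≤ q ≤ n-2, (n-1)a = 1, and 0b = 1, 1b = 2, qb = q+1 for 2 ≤ q ≤ n-2, (n-1)b = 2. Then for every k ≥ 0, each element q of {1+2k, …, n-1} has exactly one preimage under the transformation (ab)^k (apply a then b, k times), namely q - 2k. In particular, if S ⊆ {1+2k,…,n-1}, then the full preimage of S under (ab)^k is { q - 2k : q ∈ S }. -/
import Mathlib


/-- Let `a : (1,…,n-1)(0→1)` and `b : (2,…,n-1)(1→2)(0→1)` be transformations of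
`Q_n = {0,…,n-1}`. For every `k ≥ 0`, each `q ∈ {1+2k,…,n-1}` has exactly one preimage
under `(ab)^k` (apply `a` then `b`, `k` times), namely `q - 2k`; consequently, the full
preimage of any `S ⊆ {1+2k,…,n-1}` under `(ab)^k` is `{q - 2k : q ∈ S}`. -/
theorem stmt13 (n : ℕ) (hn : 4 ≤ n) (a b : Fin n → Fin n)
    (ha : ∀ q : Fin n, (a q).val = if q.val = n - 1 then 1 else q.val + 1)
    (hb : ∀ q : Fin n, (b q).val = if q.val = n - 1 then 2 else q.val + 1) :
    ∀ k : ℕ,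
      (∀ q : Fin n, 1 + 2 * k ≤ q.val →
        (∃! p : Fin n, (fun x => b (a x))^[k] p = q) ∧
        (∀ p : Fin n, (fun x => b (a x))^[k] p = q → p.val + 2 * k = q.val)) ∧
      (∀ S : Set (Fin n), (∀ q ∈ S, 1 + 2 * k ≤ q.val) →
        (fun x => b (a x))^[k] ⁻¹' S = {p : Fin n | ∃ q ∈ S, p.val + 2 * k = q.val}) := by
  set f : Fin n → Fin n := fun x => b (a x) with hfdef
  have hstep2 : ∀ p : Fin n, p.val + 2 < n → (f p).val = p.val + 2 := by
    intro p hp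
    have ha1 : (a p).val = p.val + 1 := by rw [ha, if_neg (by omega)]
    show (b (a p)).val = p.val + 2
    rw [hb, if_neg (by omega), ha1]
  have step : ∀ p : Fin n, (f p).val = 2 ∨ (f p).val = p.val + 2 := by
    intro p
    by_cases hp : p.val + 2 < n
    · exact Or.inr (hstep2 p hp)
    · left
      have hlt : p.val < n := p.isLt
      by_cases h1 : p.val = n - 1
      · have ha1 : (a p).val = 1 := by rw [ha, if_pos h1]
        show (b (a p)).val = 2
        rw [hb, if_neg (by omega), ha1]
      · have ha1 : (a p).val = n - 1 := by rw [ha, if_neg h1]; omega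
        show (b (a p)).val = 2
        rw [hb, if_pos ha1]
  -- forward determinism
  have fwd : ∀ k : ℕ, ∀ q p : Fin n, p.val + 2 * k = q.val → f^[k] p = q := by
    intro k
    induction k with
    | zero =>
      intro q p h
      simp only [Function.iterate_zero, id_eq]
      exact Fin.ext (by omega)
    | succ k ih =>
      intro q p h
      have hq : q.val < n := q.isLt
      have hfp : (f p).val = p.val + 2 := hstep2 p (by omega)
      rw [Function.iterate_succ_apply]
      exact ih q (f p) (by omega)
  -- uniqueness / value of preimage
  have uniq : ∀ k : ℕ, ∀ q p : Fin n, 1 + 2 * k ≤ q.val →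
      f^[k] p = q → p.val + 2 * k = q.val := by
    intro k
    induction k with
    | zero =>
      intro q p _ hpq
      simp only [Function.iterate_zero, id_eq] at hpq
      have := congrArg Fin.val hpq
      omega
    | succ k ih =>
      intro q p hq hpq
      rw [Function.iterate_succ_apply] at hpq
      have h1 := ih q (f p) (by omega) hpq
      rcases step p with h2 | h2 <;> omega
  intro k
  constructor
  · intro q hq
    have hqlt : q.val < n := q.isLt
    refine ⟨⟨⟨q.val - 2 * k, by omega⟩, fwd k q _ (by simp; omega), ?_⟩,
      fun p hp => uniq k q p hq hp⟩
    intro y hy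
    have := uniq k q y hq hy
    exact Fin.ext (by simp; omega)
  · intro S hS
    ext p
    simp only [Set.mem_preimage, Set.mem_setOf_eq]
    constructor
    · intro hp
      exact ⟨f^[k] p, hp, uniq k (f^[k] p) p (hS _ hp) rfl⟩
    · rintro ⟨q, hqS, hpq⟩
      rw [fwd k q p hpq]
      exact hqS
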